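/- Let 0 ≤ λ < 1, 0 ≤ β < 1, L > 0, and 0 < α ≤ (1−√λ)/(4L), and let g(x) = (x − √λ)(x − β) − 8α²L²λ(1−β)/(1−√λ). Then every real root x of g satisfies √λ + β − 1 < x < 1; consequently the 2×2 matrix [[√λ, α²λ/(1−√λ)], [8(1−β)L², β]] has spectral radius strictly less than 1. -/

import Mathlib

/-- For `0 ≤ λ < 1`, `0 ≤ β < 1`, `L > 0`, `0 < α ≤ (1-√λ)/(4L)`, every real
root of `g(x) = (x - √λ)(x - β) - 8α²L²λ(1-β)/(1-√λ)` lies in `(√λ + β - 1, 1)`; consequently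
the matrix `[[√λ, α²λ/(1-√λ)], [8(1-β)L², β]]` has spectral radius `< 1`. -/
theorem g_roots_and_spectral_radius (lam β L α : ℝ) (hlam0 : 0 ≤ lam) (hlam1 : lam < 1)
    (hβ0 : 0 ≤ β) (hβ1 : β < 1) (hL : 0 < L) (hα0 : 0 < α)
    (hα : α ≤ (1 - Real.sqrt lam) / (4 * L)) :
    (∀ x : ℝ,
        (x - Real.sqrt lam) * (x - β) -
            8 * α ^ 2 * L ^ 2 * lam * (1 - β) / (1 - Real.sqrt lam) = 0 →
        Real.sqrt lam + β - 1 < x ∧ x < 1) ∧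
      spectralRadius ℝ
          (Matrix.of ![![Real.sqrt lam, α ^ 2 * lam / (1 - Real.sqrt lam)],
            ![8 * (1 - β) * L ^ 2, β]]) < 1 := by
  set s := Real.sqrt lam with hs
  have hs0 : 0 ≤ s := Real.sqrt_nonneg _
  have hs1 : s < 1 := by
    rw [hs, show (1:ℝ) = Real.sqrt 1 by simp]
    exact Real.sqrt_lt_sqrt hlam0 hlam1
  have h1s : 0 < 1 - s := by linarith
  set C := 8 * α ^ 2 * L ^ 2 * lam * (1 - β) / (1 - s) with hCdef
  have h1β : (0:ℝ) ≤ 1 - β := by linarith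
  have hC0 : 0 ≤ C := by
    apply div_nonneg _ (le_of_lt h1s)
    exact mul_nonneg (by positivity) h1β
  have h16 : 16 * α ^ 2 * L ^ 2 ≤ (1 - s) ^ 2 := by
    have h4 : α * (4 * L) ≤ 1 - s := (le_div_iff₀ (by positivity)).mp hα
    nlinarith [mul_pos hα0 hL]
  have hClt : C < (1 - s) * (1 - β) := by
    rw [hCdef, div_lt_iff₀ h1s]
    nlinarith [mul_le_mul_of_nonneg_right h16 h1β,
      mul_pos (mul_pos (mul_pos hα0 hα0) (mul_pos hL hL)) (by linarith : (0:ℝ) < 1 - β),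
      mul_nonneg (mul_nonneg (mul_nonneg hα0.le hα0.le) (mul_nonneg hL.le hL.le)) h1β]
  have key : ∀ x : ℝ, (x - s) * (x - β) - C = 0 → s + β - 1 < x ∧ x < 1 := by
    intro x hx
    have hprod : (x - s) * (x - β) = C := by linarith
    constructor
    · by_contra h
      push_neg at h
      nlinarith [mul_le_mul (by linarith : 1 - β ≤ s - x) (by linarith : 1 - s ≤ β - x)
        (by linarith) (by linarith)]
    · by_contra h
      push_neg at h
      nlinarith [mul_le_mul (by linarith : 1 - s ≤ x - s) (by linarith : 1 - β ≤ x - β)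
        (by linarith) (by linarith)]
  refine ⟨fun x hx => key x hx, ?_⟩
  -- largest root
  set D := (s - β) ^ 2 + 4 * C with hDdef
  have hD0 : 0 ≤ D := by positivity
  set r := ((s + β) + Real.sqrt D) / 2 with hrdef
  have hsqD : Real.sqrt D ^ 2 = D := Real.sq_sqrt hD0
  have hsqD0 : 0 ≤ Real.sqrt D := Real.sqrt_nonneg _
  have hgr : (r - s) * (r - β) - C = 0 := by
    rw [hrdef]
    linear_combination hsqD / 4 + hDdef / 4
  have hr1 : r < 1 := (key r hgr).2
  have hr0 : 0 ≤ r := by rw [hrdef]; positivity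
  have habs : ∀ x : ℝ, (x - s) * (x - β) - C = 0 → |x| ≤ r := by
    intro x hx
    have hsq : (2 * x - (s + β)) ^ 2 = (Real.sqrt D) ^ 2 := by
      linear_combination 4 * hx - hsqD - hDdef
    have h2r : 2 * r - (s + β) = Real.sqrt D := by rw [hrdef]; ring
    have habs' : |2 * x - (s + β)| = Real.sqrt D := by
      rw [← Real.sqrt_sq_eq_abs, hsq, Real.sqrt_sq hsqD0]
    rcases (abs_eq hsqD0).mp habs' with h | h
    · rw [abs_le]
      exact ⟨by linarith, by linarith⟩
    · rw [abs_le]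
      exact ⟨by linarith, by linarith⟩
  -- spectrum
  set M : Matrix (Fin 2) (Fin 2) ℝ :=
    Matrix.of ![![s, α ^ 2 * lam / (1 - s)], ![8 * (1 - β) * L ^ 2, β]] with hM
  have hspec : ∀ k ∈ spectrum ℝ M, |k| ≤ r := by
    intro k hk
    apply habs
    by_contra hne
    have hdet : (algebraMap ℝ (Matrix (Fin 2) (Fin 2) ℝ) k - M).det
        = (k - s) * (k - β) - C := by
      rw [Matrix.det_fin_two]
      simp [hM, Matrix.algebraMap_matrix_apply, hCdef]
      field_simp
    exact spectrum.mem_iff.mp hk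
      (by rw [Matrix.isUnit_iff_isUnit_det, isUnit_iff_ne_zero, hdet]; exact hne)
  rw [spectralRadius]
  refine lt_of_le_of_lt (iSup₂_le fun k hk => ?_)
    ((ENNReal.ofReal_lt_one.mpr hr1 : ENNReal.ofReal r < 1))
  rw [← enorm_eq_nnnorm, ← ofReal_norm, Real.norm_eq_abs]
  exact ENNReal.ofReal_le_ofReal (hspec k hk)
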